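/- Let q ≡ 1 (mod 3) be an odd prime power, q ≥ 13, and consider the graph on GF(q) × GF(q) with (i,a) adjacent to (j,b) iff (b−a)(j−i) = 1. This graph is connected. -/

import Mathlib

/-- The component of the contraction graph of `PGL(2,q)` corresponding to the
parameter `r`: vertices `(i,a)` stand for the maps `x ↦ a + r/(x-i)`, and
`(i,a)`, `(j,b)` are adjacent iff `(b-a)(j-i) = r`. -/
def pglGraph (K : Type*) [Field K] (r : K) : SimpleGraph (K × K) where
  Adj v w := v ≠ w ∧ (w.2 - v.2) * (w.1 - v.1) = r
  symm := ⟨by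
    intro v w h
    exact ⟨h.1.symm, by linear_combination h.2⟩⟩
  loopless := ⟨fun v h => h.1 rfl⟩

lemma pgl_adj {K : Type*} [Field K] {i a j b : K} (hij : i ≠ j)
    (h : (b - a) * (j - i) = 1) : (pglGraph K 1).Adj (i, a) (j, b) :=
  And.intro (fun he => hij (congrArg Prod.fst he)) h

/-- The swap map is a graph homomorphism. -/
def pglSwap (K : Type*) [Field K] : pglGraph K 1 →g pglGraph K 1 where
  toFun := Prod.swap
  map_rel' := fun {v w} h =>
    And.intro (fun he => h.1 (Prod.swap_injective he)) (by
      have := h.2; simp only [Prod.snd_swap, Prod.fst_swap]; linear_combination this)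

lemma pgl_shift {K : Type*} [Field K] (h2 : (2 : K) ≠ 0) (h3 : (3 : K) ≠ 0)
    (i a b : K) : (pglGraph K 1).Reachable (i, a) (i, b) := by
  rcases eq_or_ne b a with rfl | hc
  · exact SimpleGraph.Reachable.refl _
  have hc' : b - a ≠ 0 := sub_ne_zero.mpr hc
  set t : K := 3 / (2 * (b - a)) with ht_def
  have ht : t ≠ 0 := div_ne_zero h3 (mul_ne_zero h2 hc')
  have h2t : (2 : K) * t ≠ 0 := mul_ne_zero h2 ht
  have e1 : (pglGraph K 1).Adj (i, a) (i + t, a + 1 / t) := by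
    refine pgl_adj (fun he => ht ?_) (by field_simp; ring)
    linear_combination -he
  have e2 : (pglGraph K 1).Adj (i + t, a + 1 / t) (i - t, a + 1 / t - 1 / (2 * t)) := by
    refine pgl_adj (fun he => h2t ?_) ?_
    · linear_combination he
    · field_simp
      ring
  have e3 : (pglGraph K 1).Adj (i - t, a + 1 / t - 1 / (2 * t)) (i, b) := by
    refine pgl_adj (fun he => ht ?_) ?_
    · linear_combination -he
    · have hbd : b - (a + 1 / t - 1 / (2 * t)) = 1 / t := by
        rw [ht_def]
        field_simp
        ring
      rw [hbd]
      field_simp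
      ring
  exact ((e1.reachable.trans e2.reachable).trans e3.reachable)

theorem stmt16 {K : Type*} [Field K] [Fintype K] (q : ℕ) (hq : Fintype.card K = q)
    (hodd : Odd q) (hq3 : q % 3 = 1) (hq13 : 13 ≤ q) :
    (pglGraph K 1).Connected := by
  -- the characteristic is neither 2 nor 3
  haveI : CharP K (ringChar K) := ringChar.charP K
  obtain ⟨n, hp_prime, hcard⟩ := FiniteField.card K (ringChar K)
  have h2 : (2 : K) ≠ 0 := by
    intro h
    have hd : ringChar K ∣ 2 := by
      have := (CharP.cast_eq_zero_iff K (ringChar K) 2).mp (by exact_mod_cast h)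
      exact this
    have hp2 : ringChar K = 2 := ((Nat.prime_dvd_prime_iff_eq hp_prime Nat.prime_two).mp hd)
    have : Odd (Fintype.card K) := hq ▸ hodd
    rw [hcard, hp2] at this
    exact (Nat.not_odd_iff_even.mpr
      (Nat.even_pow.mpr ⟨even_iff_two_dvd.mpr dvd_rfl, n.ne_zero⟩)) this
  have h3 : (3 : K) ≠ 0 := by
    intro h
    have hd : ringChar K ∣ 3 := by
      have := (CharP.cast_eq_zero_iff K (ringChar K) 3).mp (by exact_mod_cast h)
      exact this
    have hp3 : ringChar K = 3 := ((Nat.prime_dvd_prime_iff_eq hp_prime Nat.prime_three).mp hd)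
    have h3q : 3 ∣ q := by
      rw [← hq, hcard, hp3]
      exact dvd_pow_self 3 n.ne_zero
    omega
  constructor
  · intro v w
    obtain ⟨i, a⟩ := v
    obtain ⟨j, b⟩ := w
    have r1 : (pglGraph K 1).Reachable (i, a) (i, 0) := pgl_shift h2 h3 i a 0
    have r2 : (pglGraph K 1).Reachable (j, 0) (j, b) := pgl_shift h2 h3 j 0 b
    have r3 : (pglGraph K 1).Reachable (i, 0) (j, 0) := by
      have := (pgl_shift h2 h3 0 i j).map (pglSwap K)
      exact this
    exact (r1.trans r3).trans r2
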